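/- For any positive integers d and m, the F₂-vector space F₂^{dm} contains a subset B₀ of size 2^m − 1 such that any two distinct subsets of B₀ of size at most d have distinct sums. -/

import Mathlib

open Finset Matrix
open scoped symmDiff

/-- If all power sums `∑ x^j` for `1 ≤ j ≤ |U|` vanish and `0 ∉ U`, then `U = ∅`. -/
lemma vander_aux {K : Type*} [Field K] (U : Finset K) (h0 : (0:K) ∉ U)
    (h : ∀ j, 1 ≤ j → j ≤ U.card → ∑ x ∈ U, x ^ j = 0) : U = ∅ := by
  by_contra hne
  have hnpos : 0 < U.card := Finset.card_pos.mpr (Finset.nonempty_of_ne_empty hne)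
  set n := U.card with hn
  let e : {x // x ∈ U} ≃ Fin n := U.equivFin
  let v : Fin n → K := fun i => ((e.symm i : U) : K)
  have hvinj : Function.Injective v := by
    intro a b hab
    have : e.symm a = e.symm b := Subtype.ext hab
    exact e.symm.injective this
  have hv0 : ∀ i, v i ≠ 0 := fun i hi => h0 (hi ▸ (e.symm i).2)
  have hsum : ∀ k, ∑ i, v i ^ k = ∑ x ∈ U, x ^ k := by
    intro k
    rw [← Finset.sum_attach U (fun x => x ^ k)]
    exact Equiv.sum_comp e.symm (fun x : {x // x ∈ U} => (x : K) ^ k)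
  let A : Matrix (Fin n) (Fin n) K := (Matrix.diagonal v * Matrix.vandermonde v)ᵀ
  have hdet : A.det ≠ 0 := by
    rw [Matrix.det_transpose, Matrix.det_mul, Matrix.det_diagonal, Matrix.det_vandermonde]
    apply mul_ne_zero
    · exact Finset.prod_ne_zero_iff.mpr fun i _ => hv0 i
    · apply Finset.prod_ne_zero_iff.mpr
      intro i _
      apply Finset.prod_ne_zero_iff.mpr
      intro j hj
      exact sub_ne_zero_of_ne fun hc => (Finset.mem_Ioi.mp hj).ne' (hvinj hc)
  have hmul : A.mulVec (fun _ => (1:K)) = 0 := by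
    funext i
    have hAij : ∀ j, A i j = v j ^ ((i : ℕ) + 1) := by
      intro j
      simp [A, Matrix.transpose_apply, Matrix.mul_apply, Matrix.diagonal, Matrix.vandermonde,
        Finset.sum_ite_eq, pow_succ', mul_comm]
    simp only [Matrix.mulVec, dotProduct, mul_one, Pi.zero_apply]
    rw [Finset.sum_congr rfl fun j _ => hAij j]
    rw [hsum]
    exact h ((i : ℕ) + 1) (Nat.succ_le_succ (Nat.zero_le _)) (Nat.succ_le_of_lt i.2)
  have h1 := Matrix.eq_zero_of_mulVec_eq_zero hdet hmul
  have := congrFun h1 ⟨0, hnpos⟩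
  exact one_ne_zero this

/-- Char 2: odd power sums up to `2d-1` vanishing forces all power sums up to `2d` to vanish. -/
lemma key_empty {K : Type*} [Field K] [CharP K 2] (d : ℕ) (U : Finset K)
    (h0 : (0:K) ∉ U) (hcard : U.card ≤ 2*d)
    (h : ∀ i < d, ∑ x ∈ U, x ^ (2*i+1) = 0) : U = ∅ := by
  have main : ∀ j, 1 ≤ j → j ≤ 2*d → ∑ x ∈ U, x ^ j = 0 := by
    intro j
    induction j using Nat.strong_induction_on with
    | _ j ih =>
      intro hj1 hj2
      rcases Nat.even_or_odd j with ⟨k, hk⟩ | ⟨i, hi⟩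
      · have hk1 : 1 ≤ k := by omega
        have hik := ih k (by omega) hk1 (by omega)
        have heq : ∑ x ∈ U, x ^ j = (∑ x ∈ U, x ^ k) ^ 2 := by
          rw [sum_pow_char]
          refine Finset.sum_congr rfl fun x _ => ?_
          rw [← pow_mul]; congr 1; omega
        rw [heq, hik]; ring
      · rw [hi]; exact h i (by omega)
  exact vander_aux U h0 fun j hj1 hj2 => main j hj1 (le_trans hj2 hcard)

/-- In char 2, equal sums over `S` and `T` give vanishing sum over the symmetric difference. -/
lemma symmdiff_sum_zero {α K : Type*} [DecidableEq α] [Field K] [CharP K 2]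
    (S T : Finset α) (f : α → K) (h : ∑ x ∈ S, f x = ∑ x ∈ T, f x) :
    ∑ x ∈ S ∆ T, f x = 0 := by
  have hdisj : Disjoint (S \ T) (T \ S) := disjoint_sdiff_sdiff
  rw [symmDiff_def, Finset.sup_eq_union, Finset.sum_union hdisj]
  have h1 : ∑ x ∈ S \ T, f x = ∑ x ∈ S, f x - ∑ x ∈ S ∩ T, f x := by
    rw [eq_sub_iff_add_eq, ← Finset.sum_union (Finset.disjoint_sdiff_inter S T),
      Finset.sdiff_union_inter]
  have h2 : ∑ x ∈ T \ S, f x = ∑ x ∈ T, f x - ∑ x ∈ T ∩ S, f x := by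
    rw [eq_sub_iff_add_eq, ← Finset.sum_union (Finset.disjoint_sdiff_inter T S),
      Finset.sdiff_union_inter]
  rw [h1, h2, Finset.inter_comm T S, h]
  have h20 : (2:K) = 0 := by exact_mod_cast CharP.cast_eq_zero K 2
  ring_nf
  rw [h20]
  ring

theorem exists_sidon_type_set (d m : ℕ) (hd : 0 < d) (hm : 0 < m) :
    ∃ B₀ : Finset (Fin (d * m) → ZMod 2),
      B₀.card = 2 ^ m - 1 ∧
      ∀ S T : Finset (Fin (d * m) → ZMod 2), S ⊆ B₀ → T ⊆ B₀ →
        S.card ≤ d → T.card ≤ d → (∑ v ∈ S, v) = ∑ v ∈ T, v → S = T := by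
  haveI : Fact (Nat.Prime 2) := ⟨Nat.prime_two⟩
  set K := GaloisField 2 m with hK
  haveI : Fintype K := Fintype.ofFinite K
  haveI : DecidableEq K := Classical.decEq K
  haveI : DecidableEq (Fin d → K) := Classical.decEq _
  -- the BCH-style map
  set φ : K → (Fin d → K) := fun x i => x ^ (2*(i:ℕ)+1) with hφ
  have hφinj : Function.Injective φ := by
    intro a b hab
    have := congrFun hab ⟨0, hd⟩
    simpa [hφ] using this
  set nz : Finset K := Finset.univ \ {0} with hnz
  have hnzcard : nz.card = 2 ^ m - 1 := by
    rw [hnz, Finset.card_sdiff_of_subset (by simp), Finset.card_singleton, Finset.card_univ]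
    have : Nat.card K = 2 ^ m := GaloisField.card 2 m hm.ne'
    rw [← Nat.card_eq_fintype_card, this]
  set B' : Finset (Fin d → K) := nz.image φ with hB'
  have hB'card : B'.card = 2 ^ m - 1 := by
    rw [hB', Finset.card_image_of_injective _ hφinj, hnzcard]
  -- linear equivalence
  have hfr : Module.finrank (ZMod 2) (Fin (d*m) → ZMod 2) =
      Module.finrank (ZMod 2) (Fin d → K) := by
    rw [Module.finrank_fintype_fun_eq_card, Module.finrank_pi_fintype]
    simp [GaloisField.finrank 2 hm.ne', Fintype.card_fin, mul_comm]
    exact Or.inl (GaloisField.finrank 2 hm.ne').symm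
  let e : (Fin (d*m) → ZMod 2) ≃ₗ[ZMod 2] (Fin d → K) :=
    LinearEquiv.ofFinrankEq _ _ hfr
  refine ⟨B'.image e.symm, ?_, ?_⟩
  · rw [Finset.card_image_of_injective _ e.symm.injective, hB'card]
  · intro S T hS hT hSc hTc hsum
    -- move to the K side
    have himg : (B'.image e.symm).image e = B' := by
      rw [Finset.image_image]
      have : (⇑e ∘ ⇑e.symm) = id := by funext x; simp
      rw [this, Finset.image_id]
    set S' := S.image e with hS'
    set T' := T.image e with hT'
    have hS'sub : S' ⊆ B' := himg ▸ Finset.image_subset_image hS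
    have hT'sub : T' ⊆ B' := himg ▸ Finset.image_subset_image hT
    have hS'c : S'.card ≤ d := by
      rw [hS', Finset.card_image_of_injective _ e.injective]; exact hSc
    have hT'c : T'.card ≤ d := by
      rw [hT', Finset.card_image_of_injective _ e.injective]; exact hTc
    have hsum' : (∑ v ∈ S', v) = ∑ v ∈ T', v := by
      rw [hS', hT', Finset.sum_image (fun x _ y _ h => e.injective h),
        Finset.sum_image (fun x _ y _ h => e.injective h), ← map_sum, ← map_sum, hsum]
    -- pull back to K
    set S₀ : Finset K := nz.filter (fun x => φ x ∈ S') with hS₀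
    set T₀ : Finset K := nz.filter (fun x => φ x ∈ T') with hT₀
    have himS : S₀.image φ = S' := by
      apply Finset.Subset.antisymm
      · intro v hv
        obtain ⟨x, hx, rfl⟩ := Finset.mem_image.mp hv
        exact (Finset.mem_filter.mp hx).2
      · intro v hv
        obtain ⟨x, hx, rfl⟩ := Finset.mem_image.mp (hS'sub hv)
        exact Finset.mem_image.mpr ⟨x, Finset.mem_filter.mpr ⟨hx, hv⟩, rfl⟩
    have himT : T₀.image φ = T' := by
      apply Finset.Subset.antisymm
      · intro v hv
        obtain ⟨x, hx, rfl⟩ := Finset.mem_image.mp hv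
        exact (Finset.mem_filter.mp hx).2
      · intro v hv
        obtain ⟨x, hx, rfl⟩ := Finset.mem_image.mp (hT'sub hv)
        exact Finset.mem_image.mpr ⟨x, Finset.mem_filter.mpr ⟨hx, hv⟩, rfl⟩
    have hS₀c : S₀.card ≤ d := by
      rw [← Finset.card_image_of_injective S₀ hφinj, himS]; exact hS'c
    have hT₀c : T₀.card ≤ d := by
      rw [← Finset.card_image_of_injective T₀ hφinj, himT]; exact hT'c
    -- coordinatewise power sums
    have hps : ∀ i : Fin d, ∑ x ∈ S₀, x ^ (2*(i:ℕ)+1) = ∑ x ∈ T₀, x ^ (2*(i:ℕ)+1) := by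
      intro i
      have h1 : ∑ x ∈ S₀, x ^ (2*(i:ℕ)+1) = ∑ v ∈ S', v i := by
        rw [← himS, Finset.sum_image (fun x _ y _ h => hφinj h)]
      have h2 : ∑ x ∈ T₀, x ^ (2*(i:ℕ)+1) = ∑ v ∈ T', v i := by
        rw [← himT, Finset.sum_image (fun x _ y _ h => hφinj h)]
      rw [h1, h2]
      have := congrFun hsum' i
      simpa [Finset.sum_apply] using this
    -- symmetric difference
    set U : Finset K := S₀ ∆ T₀ with hU
    have hU0 : (0:K) ∉ U := by
      intro hmem
      have : (0:K) ∈ S₀ ∪ T₀ := by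
        rw [hU, symmDiff_def, Finset.sup_eq_union] at hmem
        rcases Finset.mem_union.mp hmem with h' | h'
        · exact Finset.mem_union_left _ (Finset.mem_sdiff.mp h').1
        · exact Finset.mem_union_right _ (Finset.mem_sdiff.mp h').1
      rcases Finset.mem_union.mp this with h' | h'
      · exact (Finset.mem_sdiff.mp (Finset.mem_filter.mp h').1).2 (Finset.mem_singleton_self 0)
      · exact (Finset.mem_sdiff.mp (Finset.mem_filter.mp h').1).2 (Finset.mem_singleton_self 0)
    have hUcard : U.card ≤ 2*d := by
      have h1 : U ⊆ S₀ ∪ T₀ := by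
        rw [hU, symmDiff_def, Finset.sup_eq_union]
        exact Finset.union_subset_union (Finset.sdiff_subset) (Finset.sdiff_subset)
      calc U.card ≤ (S₀ ∪ T₀).card := Finset.card_le_card h1
        _ ≤ S₀.card + T₀.card := Finset.card_union_le _ _
        _ ≤ 2*d := by omega
    have hUzero : ∀ i < d, ∑ x ∈ U, x ^ (2*i+1) = 0 := by
      intro i hi
      exact symmdiff_sum_zero S₀ T₀ (fun x => x ^ (2*i+1)) (hps ⟨i, hi⟩)
    have hUempty : U = ∅ := key_empty d U hU0 hUcard hUzero
    have hST₀ : S₀ = T₀ := symmDiff_eq_bot.mp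
      (by rw [Finset.bot_eq_empty, ← hU]; exact hUempty)
    have hST' : S' = T' := by rw [← himS, ← himT, hST₀]
    -- transport back
    have : S.image e = T.image e := hST'
    have him2 : ∀ W : Finset (Fin (d*m) → ZMod 2), (W.image e).image e.symm = W := by
      intro W
      rw [Finset.image_image]
      have : (⇑e.symm ∘ ⇑e) = id := by funext x; simp
      rw [this, Finset.image_id]
    rw [← him2 S, ← him2 T, this]
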